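/- Let X be a set, let k ≥ 1, and let f_1, …, f_k : X → X be maps; for a word w ∈ {1,…,k}ⁿ write f_w for the corresponding n-fold composite, and for g : X → ℝ and Q ∈ X write S_n(g, Q) = Σ_{w ∈ {1,…,k}ⁿ} g(f_w(Q)). Let hX : X → ℝ with hX ≥ 1 pointwise, let h : X → ℝ, and let δ > 1 and β = k·δ, together with constants C₃ ≥ 0, a ≥ 0, b ≥ 0. Assume: (i) |Σ_{i=1}^k h(f_i(Q)) − β·h(Q)| ≤ C₃·√(hX(Q)) for all Q ∈ X; (ii) for every ε > 0 there is C_ε ≥ 0 with S_n(hX, Q) ≤ C_ε·kⁿ·(δ+ε)ⁿ·hX(Q) for all n ≥ 0 and all Q ∈ X; (iii) |h(Q)| ≤ a·hX(Q) + b for all Q ∈ X. Let P ∈ X and let ĥ(P) = lim_{n→∞} β^{−n}·S_n(h, P) (this limit exists by (i) and (ii)). If ĥ(P) ≠ 0, then the limit lim_{n→∞} (1/k)·S_n(hX, P)^{1/n} exists and equals δ. -/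

import Mathlib

open Filter Topology

/-- `compWord f w P` is the composite `f_{w_1} ∘ ⋯ ∘ f_{w_n}` applied to `P`,
for the word `w = (w_1, …, w_n)` over the alphabet `Fin k`. -/
def compWord {X : Type*} {k : ℕ} (f : Fin k → X → X) : List (Fin k) → X → X
  | [], P => P
  | i :: w, P => f i (compWord f w P)

/-- `heightSum f g n P = Σ_{w ∈ {1,…,k}ⁿ} g (f_w P)`, the sum over all `kⁿ` words of length `n`. -/
noncomputable def heightSum {X : Type*} {k : ℕ} (f : Fin k → X → X) (g : X → ℝ)
    (n : ℕ) (P : X) : ℝ :=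
  ∑ w : Fin n → Fin k, g (compWord f (List.ofFn w) P)

/-- with `δ > 1`, `β = k·δ`, the eigendivisor relation (i), the growth bound (ii)
for every `ε > 0`, and the comparison (iii), if the canonical height
`ĥ(P) = lim β^{−n}·S_n(h, P)` of a point `P` is nonzero, then the arithmetic degree of `P`
exists and equals `δ`: `(1/k)·S_n(hX, P)^{1/n} → δ`. -/
private lemma aux_tendsto_rpow_inv (d : ℝ) (hd : 0 < d) :
    Tendsto (fun n : ℕ => d ^ ((n : ℝ)⁻¹)) atTop (𝓝 1) := by
  have h2 : ContinuousAt (fun r : ℝ => d ^ r) 0 :=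
    Real.continuousAt_const_rpow hd.ne'
  simpa [Real.rpow_zero, Function.comp_def] using h2.tendsto.comp tendsto_inv_atTop_nhds_zero_nat

private lemma aux_rpow_mul_pow (c x : ℝ) (hc : 0 ≤ c) (hx : 0 < x) (n : ℕ) (hn : n ≠ 0) :
    (c * x ^ n) ^ ((n : ℝ)⁻¹) = c ^ ((n : ℝ)⁻¹) * x := by
  have hn0 : (n : ℝ) ≠ 0 := Nat.cast_ne_zero.2 hn
  rw [Real.mul_rpow hc (pow_nonneg hx.le n), ← Real.rpow_natCast x n,
    ← Real.rpow_mul hx.le, mul_inv_cancel₀ hn0, Real.rpow_one]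


theorem canonical_height_nonzero_arithmetic_degree {X : Type*} {k : ℕ} (hk : 1 ≤ k)
    (f : Fin k → X → X) (hX h : X → ℝ) (δ C₃ a b : ℝ)
    (hδ : 1 < δ) (hC₃ : 0 ≤ C₃) (ha : 0 ≤ a) (hb : 0 ≤ b)
    (hX1 : ∀ Q : X, 1 ≤ hX Q)
    (hi : ∀ Q : X,
      |(∑ i : Fin k, h (f i Q)) - ((k : ℝ) * δ) * h Q| ≤ C₃ * Real.sqrt (hX Q))
    (hii : ∀ ε > (0 : ℝ), ∃ Cε ≥ (0 : ℝ), ∀ n : ℕ, ∀ Q : X,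
      heightSum f hX n Q ≤ Cε * (k : ℝ) ^ n * (δ + ε) ^ n * hX Q)
    (hiii : ∀ Q : X, |h Q| ≤ a * hX Q + b)
    (P : X) (L : ℝ)
    (hlim : Tendsto (fun n : ℕ => heightSum f h n P / ((k : ℝ) * δ) ^ n) atTop (𝓝 L))
    (hL : L ≠ 0) :
    Tendsto (fun n : ℕ => (1 / (k : ℝ)) * heightSum f hX n P ^ ((n : ℝ)⁻¹)) atTop
      (𝓝 δ) := by
  have hK0 : (0 : ℝ) < (k : ℝ) := by exact_mod_cast hk
  have hδ0 : (0 : ℝ) < δ := lt_trans one_pos hδ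
  have hKδ : (0 : ℝ) < (k : ℝ) * δ := mul_pos hK0 hδ0
  -- cardinality
  have hcard : ∀ n : ℕ, (Fintype.card (Fin n → Fin k) : ℝ) = (k : ℝ) ^ n := by
    intro n; simp [Fintype.card_fun]
  -- lower bound k^n ≤ u n
  have hulb : ∀ n : ℕ, (k : ℝ) ^ n ≤ heightSum f hX n P := by
    intro n
    calc (k : ℝ) ^ n = ∑ _w : Fin n → Fin k, (1 : ℝ) := by
          simp [Finset.card_univ, Fintype.card_fun]
      _ ≤ heightSum f hX n P := Finset.sum_le_sum fun w _ => hX1 _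
  have hupos : ∀ n : ℕ, (0 : ℝ) < heightSum f hX n P := fun n =>
    lt_of_lt_of_le (by positivity) (hulb n)
  -- triangle inequality bound
  have htri : ∀ n : ℕ, |heightSum f h n P| ≤ a * heightSum f hX n P + b * (k : ℝ) ^ n := by
    intro n
    calc |heightSum f h n P| ≤ ∑ w : Fin n → Fin k, |h (compWord f (List.ofFn w) P)| :=
          Finset.abs_sum_le_sum_abs _ _
      _ ≤ ∑ w : Fin n → Fin k, (a * hX (compWord f (List.ofFn w) P) + b) :=
          Finset.sum_le_sum fun w _ => hiii _
      _ = a * heightSum f hX n P + b * (k : ℝ) ^ n := by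
          rw [Finset.sum_add_distrib, ← Finset.mul_sum, Finset.sum_const,
            Finset.card_univ, nsmul_eq_mul, hcard, heightSum]
          ring
  -- |S_n(h)| / (kδ)^n → |L|
  have habs : Tendsto (fun n : ℕ => |heightSum f h n P| / ((k : ℝ) * δ) ^ n) atTop (𝓝 |L|) := by
    have := hlim.abs
    refine this.congr fun n => ?_
    rw [abs_div, abs_of_pos (pow_pos hKδ n)]
  have hLpos : 0 < |L| := abs_pos.2 hL
  -- eventually |S_n(h)| ≥ (|L|/2) (kδ)^n
  have hev1 : ∀ᶠ n : ℕ in atTop,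
      (|L| / 2) * ((k : ℝ) * δ) ^ n ≤ |heightSum f h n P| := by
    have h2 : |L| / 2 < |L| := by linarith
    filter_upwards [habs.eventually (eventually_gt_nhds h2)] with n hn
    exact ((lt_div_iff₀ (pow_pos hKδ n)).1 hn).le
  -- eventually b * k^n ≤ (|L|/4) (kδ)^n
  have hev2 : ∀ᶠ n : ℕ in atTop,
      b * (k : ℝ) ^ n ≤ (|L| / 4) * ((k : ℝ) * δ) ^ n := by
    have hδn : Tendsto (fun n : ℕ => (|L| / 4) * δ ^ n) atTop atTop :=
      (tendsto_pow_atTop_atTop_of_one_lt hδ).const_mul_atTop (by linarith)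
    filter_upwards [hδn.eventually_ge_atTop b] with n hn
    calc b * (k : ℝ) ^ n ≤ ((|L| / 4) * δ ^ n) * (k : ℝ) ^ n := by
          exact mul_le_mul_of_nonneg_right hn (by positivity)
      _ = (|L| / 4) * ((k : ℝ) * δ) ^ n := by rw [mul_pow]; ring
  -- eventually a * u n ≥ (|L|/4)(kδ)^n
  have hev3 : ∀ᶠ n : ℕ in atTop,
      (|L| / 4) * ((k : ℝ) * δ) ^ n ≤ a * heightSum f hX n P := by
    filter_upwards [hev1, hev2] with n h1 h2
    have := htri n
    nlinarith [pow_pos hKδ n]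
  -- a > 0
  have hapos : 0 < a := by
    obtain ⟨n, hn⟩ := hev3.exists
    rcases ha.lt_or_eq with h | h
    · exact h
    · exfalso
      rw [← h, zero_mul] at hn
      nlinarith [pow_pos hKδ n]
  set c : ℝ := |L| / (4 * a) with hc
  have hcpos : 0 < c := by positivity
  have hev4 : ∀ᶠ n : ℕ in atTop,
      c * ((k : ℝ) * δ) ^ n ≤ heightSum f hX n P := by
    filter_upwards [hev3] with n hn
    rw [hc, div_mul_eq_mul_div, div_le_iff₀ (by positivity)]
    nlinarith
  -- main convergence: v n := u n ^ (n⁻¹) → kδ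
  have hv : Tendsto (fun n : ℕ => heightSum f hX n P ^ ((n : ℝ)⁻¹)) atTop
      (𝓝 ((k : ℝ) * δ)) := by
    rw [tendsto_order]
    constructor
    · intro x hx
      have hl : Tendsto (fun n : ℕ => c ^ ((n : ℝ)⁻¹) * ((k : ℝ) * δ)) atTop
          (𝓝 (1 * ((k : ℝ) * δ))) :=
        (aux_tendsto_rpow_inv c hcpos).mul_const _
      rw [one_mul] at hl
      filter_upwards [hl.eventually (eventually_gt_nhds hx), hev4,
        eventually_ge_atTop 1] with n h1 h2 hn1
      have hne : n ≠ 0 := by omega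
      calc x < c ^ ((n : ℝ)⁻¹) * ((k : ℝ) * δ) := h1
        _ = (c * ((k : ℝ) * δ) ^ n) ^ ((n : ℝ)⁻¹) :=
          (aux_rpow_mul_pow c _ hcpos.le hKδ n hne).symm
        _ ≤ heightSum f hX n P ^ ((n : ℝ)⁻¹) :=
          Real.rpow_le_rpow (by positivity) h2 (by positivity)
    · intro x hx
      set ε : ℝ := (x - (k : ℝ) * δ) / (2 * (k : ℝ)) with hε
      have hεpos : 0 < ε := by
        apply div_pos (by linarith) (by positivity)
      obtain ⟨C, hC0, hC⟩ := hii ε hεpos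
      set D : ℝ := C * hX P with hD
      have hD1 : 1 ≤ D := by
        have h0 := hC 0 P
        have : heightSum f hX 0 P = hX P := by
          simp [heightSum]
          rfl
        rw [this] at h0
        simp at h0
        have := hX1 P
        linarith [hupos 0, (by simpa [heightSum] using hulb 0 : (1:ℝ) ≤ heightSum f hX 0 P),
          h0]
      have hDpos : 0 < D := lt_of_lt_of_le one_pos hD1
      have hkey : (k : ℝ) * (δ + ε) < x := by
        have : (k : ℝ) * ε = (x - (k : ℝ) * δ) / 2 := by
          rw [hε]; field_simp
        nlinarith
      have hkεpos : 0 < (k : ℝ) * (δ + ε) := by positivity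
      have hu : Tendsto (fun n : ℕ => D ^ ((n : ℝ)⁻¹) * ((k : ℝ) * (δ + ε))) atTop
          (𝓝 (1 * ((k : ℝ) * (δ + ε)))) :=
        (aux_tendsto_rpow_inv D hDpos).mul_const _
      rw [one_mul] at hu
      filter_upwards [hu.eventually (eventually_lt_nhds hkey),
        eventually_ge_atTop 1] with n h1 hn1
      have hne : n ≠ 0 := by omega
      have hub : heightSum f hX n P ≤ D * ((k : ℝ) * (δ + ε)) ^ n := by
        have := hC n P
        calc heightSum f hX n P ≤ C * (k : ℝ) ^ n * (δ + ε) ^ n * hX P := this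
          _ = D * ((k : ℝ) * (δ + ε)) ^ n := by rw [hD, mul_pow]; ring
      calc heightSum f hX n P ^ ((n : ℝ)⁻¹)
          ≤ (D * ((k : ℝ) * (δ + ε)) ^ n) ^ ((n : ℝ)⁻¹) :=
            Real.rpow_le_rpow (hupos n).le hub (by positivity)
        _ = D ^ ((n : ℝ)⁻¹) * ((k : ℝ) * (δ + ε)) :=
            aux_rpow_mul_pow D _ hDpos.le hkεpos n hne
        _ < x := h1
  have := hv.const_mul (1 / (k : ℝ))
  have heq : 1 / (k : ℝ) * ((k : ℝ) * δ) = δ := by field_simp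
  rwa [heq] at this
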